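/- arXiv:1609.07837 — 4 statements merged into one kernel-verified Lean document; each statement's English description precedes it below -/
import Mathlib

section
/- Let λ > 0, d₁ > 0, and let p(u) = 1 − u/d₁ for 0 < u ≤ d₁ and p(u) = 0 for u > d₁ be the linear LoS probability function. Then for all r and r₂ with 0 < r ≤ d₁ and r₂ ≥ d₁, one has exp(−∫₀^{r₂} p(u)·2πλu du) · exp(−∫₀^{r} (1 − p(u))·2πλu du) · (1 − p(r)) · 2πλr = exp(−πλd₁²/3 − 2πλr³/(3d₁)) · (r/d₁) · 2πλr. -/
open Real Set intervalIntegral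

lemma poly_int (c d₁ a : ℝ) (hd₁ : 0 < d₁) :
    ∫ u in (0:ℝ)..a, (1 - u / d₁) * (c * u) = c * a ^ 2 / 2 - c * a ^ 3 / (3 * d₁) := by
  have h : ∀ u : ℝ, (1 - u / d₁) * (c * u) = c * u - (c / d₁) * u ^ 2 := by
    intro u; field_simp
  simp only [h]
  rw [intervalIntegral.integral_sub ((by fun_prop : Continuous (fun u : ℝ => c * u)).intervalIntegrable _ _)
      ((by fun_prop : Continuous (fun u : ℝ => c / d₁ * u ^ 2)).intervalIntegrable _ _),
    intervalIntegral.integral_const_mul, intervalIntegral.integral_const_mul,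
    integral_id, integral_pow]
  ring

lemma poly_int2 (c d₁ a : ℝ) (hd₁ : 0 < d₁) :
    ∫ u in (0:ℝ)..a, (u / d₁) * (c * u) = c * a ^ 3 / (3 * d₁) := by
  have h : ∀ u : ℝ, (u / d₁) * (c * u) = (c / d₁) * u ^ 2 := by
    intro u; field_simp
  simp only [h]
  rw [intervalIntegral.integral_const_mul, integral_pow]
  ring

/-- Closed form of the NLoS serving-distance density `f_{R,1}^{NL}` (regime
`r₂ ≥ d₁`) in the 3GPP special case with linear LoS probability
`p u = 1 - u/d₁` for `0 < u ≤ d₁`, `p u = 0` for `u > d₁`. -/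
theorem fR1NL_closed_form_second_regime
    (lam d₁ : ℝ) (hlam : 0 < lam) (hd₁ : 0 < d₁)
    (p : ℝ → ℝ)
    (hp_le : ∀ u : ℝ, 0 < u → u ≤ d₁ → p u = 1 - u / d₁)
    (hp_gt : ∀ u : ℝ, d₁ < u → p u = 0)
    (r r₂ : ℝ) (hr0 : 0 < r) (hrd : r ≤ d₁) (hr₂d : d₁ ≤ r₂) :
    Real.exp (-(∫ u in (0:ℝ)..r₂, p u * (2 * π * lam * u))) *
      Real.exp (-(∫ u in (0:ℝ)..r, (1 - p u) * (2 * π * lam * u))) *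
      (1 - p r) * (2 * π * lam * r)
    = Real.exp (-(π * lam * d₁ ^ 2 / 3) - 2 * π * lam * r ^ 3 / (3 * d₁)) *
        (r / d₁) * (2 * π * lam * r) := by
  set c := 2 * π * lam with hc
  -- congruence on [0, d₁]
  have heq1 : Set.EqOn (fun u => p u * (c * u)) (fun u => (1 - u / d₁) * (c * u))
      (Set.uIcc 0 d₁) := by
    intro u hu
    rw [Set.uIcc_of_le hd₁.le] at hu
    rcases eq_or_lt_of_le hu.1 with h0 | h0
    · simp [← h0]
    · simp [hp_le u h0 hu.2]
  have heq2 : Set.EqOn (fun u => p u * (c * u)) (fun _ => (0:ℝ)) (Set.uIcc d₁ r₂) := by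
    intro u hu
    rw [Set.uIcc_of_le hr₂d] at hu
    rcases eq_or_lt_of_le hu.1 with h0 | h0
    · simp [← h0, hp_le d₁ hd₁ le_rfl, div_self hd₁.ne']
    · simp [hp_gt u h0]
  have hint1 : IntervalIntegrable (fun u => p u * (c * u)) MeasureTheory.volume 0 d₁ := by
    apply IntervalIntegrable.congr_ae (f := fun u => (1 - u / d₁) * (c * u))
    · exact (Continuous.intervalIntegrable (by continuity) _ _)
    · exact (MeasureTheory.ae_restrict_of_forall_mem measurableSet_uIoc
        (fun u hu => (heq1 (Set.uIoc_subset_uIcc hu)).symm))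
  have hint2 : IntervalIntegrable (fun u => p u * (c * u)) MeasureTheory.volume d₁ r₂ := by
    apply IntervalIntegrable.congr_ae (f := fun _ => (0:ℝ))
    · exact intervalIntegrable_const
    · exact (MeasureTheory.ae_restrict_of_forall_mem measurableSet_uIoc
        (fun u hu => (heq2 (Set.uIoc_subset_uIcc hu)).symm))
  have h1 : (∫ u in (0:ℝ)..r₂, p u * (c * u)) = π * lam * d₁ ^ 2 / 3 := by
    rw [← intervalIntegral.integral_add_adjacent_intervals hint1 hint2,
      intervalIntegral.integral_congr heq1, intervalIntegral.integral_congr heq2,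
      intervalIntegral.integral_zero, poly_int c d₁ d₁ hd₁]
    field_simp [hc]
    ring
  have heq3 : Set.EqOn (fun u => (1 - p u) * (c * u)) (fun u => (u / d₁) * (c * u))
      (Set.uIcc 0 r) := by
    intro u hu
    rw [Set.uIcc_of_le hr0.le] at hu
    rcases eq_or_lt_of_le hu.1 with h0 | h0
    · simp [← h0]
    · show (1 - p u) * (c * u) = (u / d₁) * (c * u)
      rw [hp_le u h0 (hu.2.trans hrd)]; ring
  have h2 : (∫ u in (0:ℝ)..r, (1 - p u) * (c * u)) = c * r ^ 3 / (3 * d₁) := by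
    rw [intervalIntegral.integral_congr heq3, poly_int2 c d₁ r hd₁]
  rw [h1, h2, hp_le r hr0 hrd, ← Real.exp_add]
  rw [hc]
  ring_nf
end

section
/- Let λ > 0, d₁ > 0, and let p(u) = 1 − u/d₁ for 0 < u ≤ d₁ and p(u) = 0 for u > d₁ be the linear LoS probability function. Then for all r and r₂ with r > d₁ and r₂ ≥ d₁, one has exp(−∫₀^{r₂} p(u)·2πλu du) · exp(−∫₀^{r} (1 − p(u))·2πλu du) · (1 − p(r)) · 2πλr = 2πλr · exp(−πλr²). In particular the LoS-exclusion factor exp(−πλd₁²/3) exactly cancels against the contribution +πλd₁²/3 in the NLoS void-probability exponent. -/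
open Real Set intervalIntegral MeasureTheory
open scoped Interval

set_option maxHeartbeats 1000000 in
/-- For serving NLoS distances `r > d₁` (so that the equal-path-loss LoS distance
`r₂` satisfies `r₂ ≥ d₁`), the density `f_{R,2}^{NL}` simplifies to the Rayleigh-type
density `2πλr · exp (−πλr²)`: the LoS-exclusion factor `exp (−πλd₁²/3)` cancels
against the `+πλd₁²/3` contribution in the NLoS void-probability exponent. -/
theorem fR2NL_closed_form
    (lam d₁ : ℝ) (hlam : 0 < lam) (hd₁ : 0 < d₁)
    (p : ℝ → ℝ)
    (hp_le : ∀ u : ℝ, 0 < u → u ≤ d₁ → p u = 1 - u / d₁)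
    (hp_gt : ∀ u : ℝ, d₁ < u → p u = 0)
    (r r₂ : ℝ) (hr : d₁ < r) (hr₂ : d₁ ≤ r₂) :
    Real.exp (-(∫ u in (0:ℝ)..r₂, p u * (2 * π * lam * u))) *
      Real.exp (-(∫ u in (0:ℝ)..r, (1 - p u) * (2 * π * lam * u))) *
      (1 - p r) * (2 * π * lam * r)
    = 2 * π * lam * r * Real.exp (-(π * lam * r ^ 2)) := by
  -- a.e. equality on (0, d₁]
  have hae1 : ∀ᵐ x ∂(volume : Measure ℝ), x ∈ Ι (0:ℝ) d₁ →
      p x * (2 * π * lam * x) = (1 - x / d₁) * (2 * π * lam * x) := by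
    refine Filter.Eventually.of_forall fun u hu => ?_
    rw [uIoc_of_le hd₁.le] at hu
    rw [hp_le u hu.1 hu.2]
  have hae2 : ∀ᵐ x ∂(volume : Measure ℝ), x ∈ Ι d₁ r₂ →
      p x * (2 * π * lam * x) = (0:ℝ) := by
    refine Filter.Eventually.of_forall fun u hu => ?_
    rw [uIoc_of_le hr₂] at hu
    rw [hp_gt u hu.1]; ring
  have hae3 : ∀ᵐ x ∂(volume : Measure ℝ), x ∈ Ι (0:ℝ) d₁ →
      (1 - p x) * (2 * π * lam * x) = (x / d₁) * (2 * π * lam * x) := by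
    refine Filter.Eventually.of_forall fun u hu => ?_
    rw [uIoc_of_le hd₁.le] at hu
    rw [hp_le u hu.1 hu.2]; ring
  have hae4 : ∀ᵐ x ∂(volume : Measure ℝ), x ∈ Ι d₁ r →
      (1 - p x) * (2 * π * lam * x) = 2 * π * lam * x := by
    refine Filter.Eventually.of_forall fun u hu => ?_
    rw [uIoc_of_le hr.le] at hu
    rw [hp_gt u hu.1]; ring
  have hres1 : (fun u => p u * (2 * π * lam * u))
      =ᵐ[MeasureTheory.volume.restrict (Ι (0:ℝ) d₁)] fun u => (1 - u / d₁) * (2 * π * lam * u) :=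
    (ae_restrict_iff' measurableSet_uIoc).mpr hae1
  have hres2 : (fun u => p u * (2 * π * lam * u))
      =ᵐ[MeasureTheory.volume.restrict (Ι d₁ r₂)] fun _ => (0:ℝ) :=
    (ae_restrict_iff' measurableSet_uIoc).mpr hae2
  have hres3 : (fun u => (1 - p u) * (2 * π * lam * u))
      =ᵐ[MeasureTheory.volume.restrict (Ι (0:ℝ) d₁)] fun u => (u / d₁) * (2 * π * lam * u) :=
    (ae_restrict_iff' measurableSet_uIoc).mpr hae3
  have hres4 : (fun u => (1 - p u) * (2 * π * lam * u))
      =ᵐ[MeasureTheory.volume.restrict (Ι d₁ r)] fun u => 2 * π * lam * u :=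
    (ae_restrict_iff' measurableSet_uIoc).mpr hae4
  -- integrability of nice integrands
  have hc1 : IntervalIntegrable (fun u : ℝ => (1 - u / d₁) * (2 * π * lam * u)) volume 0 d₁ :=
    (Continuous.intervalIntegrable (by continuity) _ _)
  have hc3 : IntervalIntegrable (fun u : ℝ => (u / d₁) * (2 * π * lam * u)) volume 0 d₁ :=
    (Continuous.intervalIntegrable (by continuity) _ _)
  have hc4 : IntervalIntegrable (fun u : ℝ => 2 * π * lam * u) volume d₁ r :=
    (Continuous.intervalIntegrable (by continuity) _ _)
  have hi1 : IntervalIntegrable (fun u => p u * (2 * π * lam * u)) volume 0 d₁ :=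
    (IntervalIntegrable.congr_ae hc1 hres1.symm)
  have hi2 : IntervalIntegrable (fun u => p u * (2 * π * lam * u)) volume d₁ r₂ :=
    (IntervalIntegrable.congr_ae intervalIntegrable_const hres2.symm)
  have hi3 : IntervalIntegrable (fun u => (1 - p u) * (2 * π * lam * u)) volume 0 d₁ :=
    (IntervalIntegrable.congr_ae hc3 hres3.symm)
  have hi4 : IntervalIntegrable (fun u => (1 - p u) * (2 * π * lam * u)) volume d₁ r :=
    (IntervalIntegrable.congr_ae hc4 hres4.symm)
  -- first integral
  have I1 : (∫ u in (0:ℝ)..r₂, p u * (2 * π * lam * u)) = π * lam * d₁ ^ 2 / 3 := by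
    rw [← intervalIntegral.integral_add_adjacent_intervals hi1 hi2,
      intervalIntegral.integral_congr_ae hae1, intervalIntegral.integral_congr_ae hae2]
    have h : ∀ u : ℝ, (1 - u / d₁) * (2 * π * lam * u)
        = (2*π*lam) * u - (2*π*lam/d₁) * u^2 := by intro u; field_simp
    simp only [h]
    rw [intervalIntegral.integral_sub ((intervalIntegrable_id).const_mul _)
      ((intervalIntegrable_pow 2).const_mul _),
      intervalIntegral.integral_const_mul, intervalIntegral.integral_const_mul,
      integral_id, integral_pow]
    simp only [intervalIntegral.integral_const, smul_zero]
    field_simp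
    ring
  -- second integral
  have I2 : (∫ u in (0:ℝ)..r, (1 - p u) * (2 * π * lam * u))
      = π * lam * r ^ 2 - π * lam * d₁ ^ 2 / 3 := by
    rw [← intervalIntegral.integral_add_adjacent_intervals hi3 hi4,
      intervalIntegral.integral_congr_ae hae3, intervalIntegral.integral_congr_ae hae4]
    have h : ∀ u : ℝ, (u / d₁) * (2 * π * lam * u) = (2*π*lam/d₁) * u^2 := by
      intro u; field_simp
    simp only [h]
    rw [intervalIntegral.integral_const_mul, integral_pow,
      intervalIntegral.integral_const_mul, integral_id]
    field_simp
    ring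
  rw [I1, I2, hp_gt r hr, ← Real.exp_add]
  ring_nf
end

section
/- Let λ > 0, let p : (0,∞) → [0,1] be continuous, and let φ : (0,∞) → (0,∞) be a continuously differentiable, strictly increasing bijection of (0,∞) onto (0,∞) with inverse ψ. Define f^L(r) = exp(−∫₀^{φ(r)} (1 − p(u))·2πλu du) · exp(−∫₀^{r} p(u)·2πλu du) · p(r) · 2πλr and f^{NL}(r) = exp(−∫₀^{ψ(r)} p(u)·2πλu du) · exp(−∫₀^{r} (1 − p(u))·2πλu du) · (1 − p(r)) · 2πλr for r > 0. Then ∫₀^{∞} (f^L(r) + f^{NL}(r)) dr = 1. -/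
open Real Set intervalIntegral MeasureTheory Filter Topology

noncomputable def sddK (lam : ℝ) (q : ℝ → ℝ) (r : ℝ) : ℝ :=
  ∫ u in (0:ℝ)..r, q u * (2 * π * lam * u)

section aux
variable {lam : ℝ} {q : ℝ → ℝ} {b a : ℝ}

lemma sdd_integrand_nonneg (hlam : 0 < lam)
    (hq01 : ∀ u ∈ Set.Ioi (0:ℝ), q u ∈ Set.Icc (0:ℝ) 1) {u : ℝ} (hu : 0 ≤ u) :
    0 ≤ q u * (2 * π * lam * u) := by
  rcases eq_or_lt_of_le hu with h | h
  · simp [← h]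
  · exact mul_nonneg (hq01 u h).1 (by positivity)

lemma sdd_ii (hlam : 0 < lam) (hq : ContinuousOn q (Set.Ioi 0))
    (hq01 : ∀ u ∈ Set.Ioi (0:ℝ), q u ∈ Set.Icc (0:ℝ) 1) (hb : 0 ≤ b) :
    IntervalIntegrable (fun u => q u * (2 * π * lam * u)) volume 0 b := by
  rw [intervalIntegrable_iff_integrableOn_Ioc_of_le hb]
  have hcont : ContinuousOn (fun u => q u * (2 * π * lam * u)) (Set.Ioc 0 b) :=
    (hq.mono Ioc_subset_Ioi_self).mul (by fun_prop)
  refine Integrable.mono' (g := fun _ => 2 * π * lam * b)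
    (integrableOn_const measure_Ioc_lt_top.ne) (hcont.aestronglyMeasurable measurableSet_Ioc) ?_
  rw [ae_restrict_iff' measurableSet_Ioc]
  filter_upwards with u hu
  have h1 := (hq01 u hu.1).1
  have h2 := (hq01 u hu.1).2
  have hu1 : 0 < u := hu.1
  have hu2 : u ≤ b := hu.2
  rw [Real.norm_eq_abs, abs_of_nonneg (sdd_integrand_nonneg hlam hq01 hu1.le)]
  calc q u * (2 * π * lam * u) ≤ 1 * (2 * π * lam * u) :=
        mul_le_mul_of_nonneg_right h2 (by positivity)
    _ = (2 * π * lam) * u := by ring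
    _ ≤ (2 * π * lam) * b := mul_le_mul_of_nonneg_left hu2 (by positivity)
    _ = 2 * π * lam * b := by ring

lemma sdd_nonneg (hlam : 0 < lam)
    (hq01 : ∀ u ∈ Set.Ioi (0:ℝ), q u ∈ Set.Icc (0:ℝ) 1) (hb : 0 ≤ b) :
    0 ≤ sddK lam q b :=
  intervalIntegral.integral_nonneg hb fun u hu => sdd_integrand_nonneg hlam hq01 hu.1

lemma sdd_le (hlam : 0 < lam) (hq : ContinuousOn q (Set.Ioi 0))
    (hq01 : ∀ u ∈ Set.Ioi (0:ℝ), q u ∈ Set.Icc (0:ℝ) 1) (hb : 0 ≤ b) :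
    sddK lam q b ≤ 2 * π * lam * b * b := by
  have h := intervalIntegral.integral_mono_on (f := fun u => q u * (2 * π * lam * u))
    (g := fun _ => 2 * π * lam * b) hb (sdd_ii hlam hq hq01 hb) intervalIntegrable_const ?_
  · rw [intervalIntegral.integral_const, smul_eq_mul] at h
    calc sddK lam q b ≤ (b - 0) * (2 * π * lam * b) := h
      _ = 2 * π * lam * b * b := by ring
  · intro u hu
    rcases eq_or_lt_of_le hu.1 with h0 | h0
    · simp [← h0]; positivity
    · have h1 := (hq01 u h0).1
      have h2 := (hq01 u h0).2
      calc q u * (2 * π * lam * u) ≤ 1 * (2 * π * lam * u) :=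
            mul_le_mul_of_nonneg_right h2 (by positivity)
        _ = (2 * π * lam) * u := by ring
        _ ≤ (2 * π * lam) * b := mul_le_mul_of_nonneg_left hu.2 (by positivity)
        _ = 2 * π * lam * b := by ring

lemma sdd_mono (hlam : 0 < lam) (hq : ContinuousOn q (Set.Ioi 0))
    (hq01 : ∀ u ∈ Set.Ioi (0:ℝ), q u ∈ Set.Icc (0:ℝ) 1) (ha : 0 ≤ a) (hab : a ≤ b) :
    sddK lam q a ≤ sddK lam q b := by
  have hb : 0 ≤ b := ha.trans hab
  have hiab : IntervalIntegrable (fun u => q u * (2 * π * lam * u)) volume a b := by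
    refine (sdd_ii hlam hq hq01 hb).mono_set ?_
    rw [uIcc_of_le hab, uIcc_of_le hb]
    exact Icc_subset_Icc ha le_rfl
  have hsum := intervalIntegral.integral_add_adjacent_intervals
    (sdd_ii hlam hq hq01 ha) hiab
  have hpos : 0 ≤ ∫ u in a..b, q u * (2 * π * lam * u) :=
    intervalIntegral.integral_nonneg hab fun u hu =>
      sdd_integrand_nonneg hlam hq01 (ha.trans hu.1)
  unfold sddK
  linarith [hsum]

lemma sdd_deriv (hlam : 0 < lam) (hq : ContinuousOn q (Set.Ioi 0))
    (hq01 : ∀ u ∈ Set.Ioi (0:ℝ), q u ∈ Set.Icc (0:ℝ) 1) {r : ℝ} (hr : 0 < r) :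
    HasDerivAt (sddK lam q) (q r * (2 * π * lam * r)) r := by
  have hcont : ContinuousOn (fun u => q u * (2 * π * lam * u)) (Set.Ioi 0) :=
    hq.mul (by fun_prop)
  exact intervalIntegral.integral_hasDerivAt_right (sdd_ii hlam hq hq01 hr.le)
    (hcont.stronglyMeasurableAtFilter isOpen_Ioi r hr)
    ((hq.continuousAt (Ioi_mem_nhds hr)).mul (by fun_prop))

lemma sdd_sum (hlam : 0 < lam) {p : ℝ → ℝ} (hp : ContinuousOn p (Set.Ioi 0))
    (hp01 : ∀ u ∈ Set.Ioi (0:ℝ), p u ∈ Set.Icc (0:ℝ) 1) {m : ℝ} (hm : 0 ≤ m) :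
    sddK lam p m + sddK lam (fun u => 1 - p u) m = π * lam * m ^ 2 := by
  have hp' : ContinuousOn (fun u => 1 - p u) (Set.Ioi 0) := continuousOn_const.sub hp
  have hp01' : ∀ u ∈ Set.Ioi (0:ℝ), (1 - p u) ∈ Set.Icc (0:ℝ) 1 := by
    intro u hu
    have := hp01 u hu
    exact ⟨by linarith [this.2], by linarith [this.1]⟩
  unfold sddK
  rw [← intervalIntegral.integral_add (sdd_ii hlam hp hp01 hm) (sdd_ii hlam hp' hp01' hm)]
  have : ∀ u : ℝ, p u * (2 * π * lam * u) + (1 - p u) * (2 * π * lam * u)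
      = (2 * π * lam) * u := by intro u; ring
  simp_rw [this]
  rw [intervalIntegral.integral_const_mul, integral_id]
  ring

end aux
noncomputable def sddFL (lam : ℝ) (p φ : ℝ → ℝ) (r : ℝ) : ℝ :=
  Real.exp (-(sddK lam (fun u => 1 - p u) (φ r))) * Real.exp (-(sddK lam p r)) *
    p r * (2 * π * lam * r)

noncomputable def sddFNL (lam : ℝ) (p ψ : ℝ → ℝ) (x : ℝ) : ℝ :=
  Real.exp (-(sddK lam p (ψ x))) * Real.exp (-(sddK lam (fun u => 1 - p u) x)) *
    (1 - p x) * (2 * π * lam * x)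

/-- Under smallest-path-loss association, the LoS and NLoS serving-distance
densities `f^L` and `f^{NL}` together form a probability density:
`∫₀^∞ (f^L r + f^{NL} r) dr = 1`. Here `p` is the LoS probability function,
`φ` is the equal-path-loss LoS→NLoS distance conversion (a `C¹`, strictly
increasing bijection of `(0,∞)` onto itself) and `ψ` is its inverse. -/
theorem serving_distance_density_integrates_to_one
    (lam : ℝ) (hlam : 0 < lam)
    (p : ℝ → ℝ) (hp : ContinuousOn p (Set.Ioi 0))
    (hp01 : ∀ u ∈ Set.Ioi (0 : ℝ), p u ∈ Set.Icc (0 : ℝ) 1)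
    (φ ψ : ℝ → ℝ)
    (hφC1 : ContDiffOn ℝ 1 φ (Set.Ioi 0))
    (hφmono : StrictMonoOn φ (Set.Ioi 0))
    (hφbij : Set.BijOn φ (Set.Ioi 0) (Set.Ioi 0))
    (hψφ : ∀ r ∈ Set.Ioi (0 : ℝ), ψ (φ r) = r)
    (hφψ : ∀ x ∈ Set.Ioi (0 : ℝ), φ (ψ x) = x) :
    (∫ r in Set.Ioi (0 : ℝ),
        (Real.exp (-(∫ u in (0:ℝ)..(φ r), (1 - p u) * (2 * π * lam * u))) *
            Real.exp (-(∫ u in (0:ℝ)..r, p u * (2 * π * lam * u))) *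
            p r * (2 * π * lam * r) +
          Real.exp (-(∫ u in (0:ℝ)..(ψ r), p u * (2 * π * lam * u))) *
            Real.exp (-(∫ u in (0:ℝ)..r, (1 - p u) * (2 * π * lam * u))) *
            (1 - p r) * (2 * π * lam * r))) = 1 := by
  have hp' : ContinuousOn (fun u => 1 - p u) (Set.Ioi 0) := continuousOn_const.sub hp
  have hp01' : ∀ u ∈ Set.Ioi (0:ℝ), (1 - p u) ∈ Set.Icc (0:ℝ) 1 := by
    intro u hu; obtain ⟨h1, h2⟩ := hp01 u hu; exact ⟨by linarith, by linarith⟩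
  have hφpos : ∀ r ∈ Set.Ioi (0:ℝ), (0:ℝ) < φ r := fun r hr => hφbij.mapsTo hr
  have hφcont : ContinuousOn φ (Set.Ioi 0) := hφC1.continuousOn
  have hφdiff : ∀ r ∈ Set.Ioi (0:ℝ), HasDerivAt φ (deriv φ r) r := fun r hr =>
    ((hφC1.differentiableOn one_ne_zero r hr).differentiableAt (Ioi_mem_nhds hr)).hasDerivAt
  have hφd0 : ∀ r ∈ Set.Ioi (0:ℝ), 0 ≤ deriv φ r := by
    intro r hr
    have hd := hφdiff r hr
    rw [hasDerivAt_iff_tendsto_slope] at hd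
    have hsub : 𝓝[>] r ≤ 𝓝[≠] r := nhdsWithin_mono _ fun x hx => ne_of_gt hx
    refine ge_of_tendsto (hd.mono_left hsub) ?_
    filter_upwards [self_mem_nhdsWithin] with x hx
    rw [slope_def_field]
    apply div_nonneg _ (by simp only [Set.mem_Ioi] at hx; linarith)
    have hx' : x ∈ Set.Ioi (0:ℝ) := Set.mem_Ioi.2 (lt_trans hr hx)
    exact sub_nonneg.2 (hφmono hr hx' hx).le
  -- φ tends to +∞ at +∞
  have hφtop : Filter.Tendsto φ Filter.atTop Filter.atTop := by
    rw [Filter.tendsto_atTop]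
    intro M
    obtain ⟨r₀, hr₀, hφr₀⟩ := hφbij.surjOn (show max M 1 ∈ Set.Ioi (0:ℝ) by
      simp only [Set.mem_Ioi]; exact lt_of_lt_of_le one_pos (le_max_right M 1))
    filter_upwards [Filter.eventually_gt_atTop r₀] with r hr
    have : φ r₀ < φ r := hφmono hr₀ (lt_trans hr₀ hr) hr
    have := le_max_left M 1
    linarith [hφr₀ ▸ this]
  set Φ : ℝ → ℝ := fun r => if 0 < r then φ r else 0 with hΦdef
  have hΦeq : ∀ r ∈ Set.Ioi (0:ℝ), Φ r = φ r := fun r hr => if_pos hr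
  have hΦnn : ∀ r, 0 ≤ Φ r := by
    intro r
    by_cases h : 0 < r
    · simp only [hΦdef, if_pos h]; exact (hφpos r h).le
    · simp only [hΦdef, if_neg h]; exact le_rfl
  -- Φ tends to 0 at 0⁺
  have hΦ0 : Filter.Tendsto Φ (𝓝[Set.Ici 0] 0) (𝓝 0) := by
    rw [tendsto_order]
    constructor
    · intro a ha
      filter_upwards with r
      exact lt_of_lt_of_le ha (hΦnn r)
    · intro b hb
      obtain ⟨r₀, hr₀, hφr₀⟩ := hφbij.surjOn (show min (b/2) 1 ∈ Set.Ioi (0:ℝ) by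
        simp only [Set.mem_Ioi, lt_min_iff]; exact ⟨by linarith, one_pos⟩)
      filter_upwards [Ico_mem_nhdsGE_of_mem (show (0:ℝ) ∈ Set.Ico (0:ℝ) r₀ from ⟨le_rfl, hr₀⟩)]
        with r hr
      by_cases h : 0 < r
      · have : φ r < φ r₀ := hφmono h hr₀ hr.2
        rw [hΦeq r h]
        have h1 : min (b/2) 1 ≤ b / 2 := min_le_left _ _
        calc φ r < φ r₀ := this
          _ = min (b/2) 1 := hφr₀
          _ < b := by linarith
      · simp only [hΦdef, if_neg h]; exact hb
  set G : ℝ → ℝ := fun r =>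
    Real.exp (-(sddK lam p r + sddK lam (fun u => 1 - p u) (Φ r))) with hGdef
  have hG0 : G 0 = 1 := by
    simp [hGdef, hΦdef, sddK, intervalIntegral.integral_same]
  -- continuity of G at 0 from the right
  have hGcont0 : ContinuousWithinAt G (Set.Ici 0) 0 := by
    have hS : Filter.Tendsto (fun r => sddK lam p r + sddK lam (fun u => 1 - p u) (Φ r))
        (𝓝[Set.Ici 0] 0) (𝓝 0) := by
      apply squeeze_zero' (g := fun r => 2 * π * lam * r * r + 2 * π * lam * Φ r * Φ r)
      · filter_upwards [self_mem_nhdsWithin] with r hr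
        exact add_nonneg (sdd_nonneg hlam hp01 hr) (sdd_nonneg hlam hp01' (hΦnn r))
      · filter_upwards [self_mem_nhdsWithin] with r hr
        exact add_le_add (sdd_le hlam hp hp01 hr) (sdd_le hlam hp' hp01' (hΦnn r))
      · have h1 : Filter.Tendsto (fun r : ℝ => 2 * π * lam * r * r) (𝓝[Set.Ici 0] 0) (𝓝 0) := by
          have hc : Continuous fun r : ℝ => 2 * π * lam * r * r := by fun_prop
          have := (hc.tendsto 0).mono_left (nhdsWithin_le_nhds (s := Set.Ici (0:ℝ)))
          simpa using this
        have h2 : Filter.Tendsto (fun r => 2 * π * lam * Φ r * Φ r) (𝓝[Set.Ici 0] 0) (𝓝 0) := by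
          have := ((tendsto_const_nhds (x := 2 * π * lam)
            (f := 𝓝[Set.Ici 0] (0:ℝ))).mul hΦ0).mul hΦ0
          simpa using this
        simpa using h1.add h2
    have h := (Real.continuous_exp.tendsto (-0 : ℝ)).comp hS.neg
    rw [show Real.exp (-0) = 1 by norm_num] at h
    unfold ContinuousWithinAt
    rw [hG0]
    exact h
  -- G tends to 0 at +∞
  have hGtop : Filter.Tendsto G Filter.atTop (𝓝 0) := by
    have hm : Filter.Tendsto (fun r => min r (φ r)) Filter.atTop Filter.atTop := by
      rw [Filter.tendsto_atTop]
      intro M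
      filter_upwards [Filter.eventually_ge_atTop M, hφtop.eventually_ge_atTop M] with r h1 h2
      exact le_min h1 h2
    have hpow : Filter.Tendsto (fun m : ℝ => π * lam * m ^ 2) Filter.atTop Filter.atTop := by
      apply Filter.Tendsto.const_mul_atTop (by positivity)
      exact (tendsto_pow_atTop (by norm_num)).comp Filter.tendsto_id |>.comp Filter.tendsto_id
    have hS : Filter.Tendsto (fun r => sddK lam p r + sddK lam (fun u => 1 - p u) (Φ r))
        Filter.atTop Filter.atTop := by
      apply Filter.tendsto_atTop_mono' Filter.atTop _ (hpow.comp hm)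
      filter_upwards [Filter.eventually_gt_atTop 0] with r hr
      have hφr := hφpos r hr
      set m := min r (φ r) with hm'
      have hm0 : 0 ≤ m := le_min hr.le hφr.le
      have hm1 : m ≤ r := min_le_left _ _
      have hm2 : m ≤ φ r := min_le_right _ _
      have hsum := sdd_sum hlam hp hp01 hm0
      have e1 : sddK lam p m ≤ sddK lam p r := sdd_mono hlam hp hp01 hm0 hm1
      have e2 : sddK lam (fun u => 1 - p u) m ≤ sddK lam (fun u => 1 - p u) (Φ r) := by
        rw [hΦeq r hr]; exact sdd_mono hlam hp' hp01' hm0 hm2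
      simp only [Function.comp]
      linarith
    have : Filter.Tendsto (fun r => Real.exp (-(sddK lam p r +
        sddK lam (fun u => 1 - p u) (Φ r)))) Filter.atTop (𝓝 0) :=
      Real.tendsto_exp_atBot.comp (Filter.tendsto_neg_atTop_atBot.comp hS)
    exact this
  set D : ℝ → ℝ := fun r =>
    (p r * (2 * π * lam * r) + (1 - p (φ r)) * (2 * π * lam * φ r) * deriv φ r) * G r with hDdef
  have hderivG : ∀ r ∈ Set.Ioi (0:ℝ), HasDerivAt (fun x => -G x) (D r) r := by
    intro r hr
    have hφr := hφpos r hr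
    have h1 : HasDerivAt (sddK lam p) (p r * (2 * π * lam * r)) r := sdd_deriv hlam hp hp01 hr
    have h2 : HasDerivAt (sddK lam (fun u => 1 - p u))
        ((1 - p (φ r)) * (2 * π * lam * φ r)) (φ r) := sdd_deriv hlam hp' hp01' hφr
    have h3 := hφdiff r hr
    have h4 : HasDerivAt (fun x => sddK lam (fun u => 1 - p u) (φ x))
        ((1 - p (φ r)) * (2 * π * lam * φ r) * deriv φ r) r := h2.comp r h3
    have h5 := ((h1.add h4).neg).exp
    have heq : G =ᶠ[𝓝 r] fun x =>
        Real.exp (-(sddK lam p x + sddK lam (fun u => 1 - p u) (φ x))) := by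
      filter_upwards [Ioi_mem_nhds hr] with x hx
      simp [hGdef, hΦeq x hx]
    have h6 := (h5.congr_of_eventuallyEq heq).neg
    refine h6.congr_deriv ?_
    simp only [hDdef, hGdef, hΦeq r hr, Pi.neg_apply, Pi.add_apply]
    ring
  have hDnn : ∀ r ∈ Set.Ioi (0:ℝ), 0 ≤ D r := by
    intro r hr
    have hφr := hφpos r hr
    have h1 := (hp01 r hr).1
    have h2 := (hp01 (φ r) hφr).2
    apply mul_nonneg _ (Real.exp_pos _).le
    have hrpos : (0:ℝ) < r := hr
    apply add_nonneg (mul_nonneg h1 (mul_nonneg (by positivity : (0:ℝ) ≤ 2 * π * lam) hrpos.le))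
    exact mul_nonneg (mul_nonneg (by linarith)
      (mul_nonneg (by positivity : (0:ℝ) ≤ 2 * π * lam) hφr.le)) (hφd0 r hr)
  have hGtop' : Filter.Tendsto (fun x => -G x) Filter.atTop (𝓝 0) := by
    simpa using hGtop.neg
  have hFTC : ∫ r in Set.Ioi (0:ℝ), D r = 1 := by
    rw [MeasureTheory.integral_Ioi_of_hasDerivAt_of_nonneg hGcont0.neg hderivG hDnn hGtop']
    rw [Pi.neg_apply, hG0]; ring
  have hDint : IntegrableOn D (Set.Ioi (0:ℝ)) :=
    MeasureTheory.integrableOn_Ioi_deriv_of_nonneg hGcont0.neg hderivG hDnn hGtop'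
  -- pointwise identity on (0, ∞)
  have hpt : ∀ r ∈ Set.Ioi (0:ℝ),
      sddFL lam p φ r + |deriv φ r| • sddFNL lam p ψ (φ r) = D r := by
    intro r hr
    have hφr := hφpos r hr
    unfold sddFL sddFNL
    rw [hψφ r hr, abs_of_nonneg (hφd0 r hr), smul_eq_mul]
    simp only [hDdef, hGdef, hΦeq r hr, neg_add, Real.exp_add]
    ring
  -- continuity facts
  have hPcont : ContinuousOn (sddK lam p) (Set.Ioi 0) := fun r hr =>
    (sdd_deriv hlam hp hp01 hr).continuousAt.continuousWithinAt
  have hQcont : ContinuousOn (sddK lam (fun u => 1 - p u)) (Set.Ioi 0) := fun r hr =>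
    (sdd_deriv hlam hp' hp01' hr).continuousAt.continuousWithinAt
  have hQφcont : ContinuousOn (fun r => sddK lam (fun u => 1 - p u) (φ r)) (Set.Ioi 0) :=
    hQcont.comp hφcont hφbij.mapsTo
  have hGcontOn : ContinuousOn G (Set.Ioi 0) := by
    apply ContinuousOn.congr
      (f := fun r => Real.exp (-(sddK lam p r + sddK lam (fun u => 1 - p u) (φ r))))
    · exact Real.continuous_exp.comp_continuousOn ((hPcont.add hQφcont).neg)
    · intro x hx; simp [hGdef, hΦeq x hx]
  have hdφcont : ContinuousOn (deriv φ) (Set.Ioi 0) := by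
    apply ContinuousOn.congr (hφC1.continuousOn_derivWithin isOpen_Ioi.uniqueDiffOn le_rfl)
    exact fun x hx => (derivWithin_of_isOpen isOpen_Ioi hx).symm
  have hDcont : ContinuousOn D (Set.Ioi 0) := by
    rw [hDdef]
    apply ContinuousOn.mul _ hGcontOn
    apply ContinuousOn.add (hp.mul (by fun_prop))
    exact ((continuousOn_const.sub (hp.comp hφcont hφbij.mapsTo)).mul
      (continuousOn_const.mul hφcont)).mul hdφcont
  have hfLcont : ContinuousOn (sddFL lam p φ) (Set.Ioi 0) := by
    unfold sddFL
    exact (((Real.continuous_exp.comp_continuousOn hQφcont.neg).mul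
      (Real.continuous_exp.comp_continuousOn hPcont.neg)).mul hp).mul (by fun_prop)
  have hTcont : ContinuousOn (fun r => |deriv φ r| • sddFNL lam p ψ (φ r)) (Set.Ioi 0) := by
    apply ContinuousOn.congr (hDcont.sub hfLcont)
    intro r hr
    have := hpt r hr
    simp only [Pi.sub_apply]
    linarith
  -- nonnegativity
  have hfLnn : ∀ r ∈ Set.Ioi (0:ℝ), 0 ≤ sddFL lam p φ r := by
    intro r hr
    unfold sddFL
    have hrpos : (0:ℝ) < r := hr
    exact mul_nonneg (mul_nonneg (mul_nonneg (Real.exp_pos _).le (Real.exp_pos _).le)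
      (hp01 r hr).1) (mul_nonneg (by positivity : (0:ℝ) ≤ 2 * π * lam) hrpos.le)
  have hTnn : ∀ r ∈ Set.Ioi (0:ℝ), 0 ≤ |deriv φ r| • sddFNL lam p ψ (φ r) := by
    intro r hr
    have hφr := hφpos r hr
    have h2 := (hp01 (φ r) hφr).2
    rw [smul_eq_mul]
    apply mul_nonneg (abs_nonneg _)
    unfold sddFNL
    exact mul_nonneg (mul_nonneg (mul_nonneg (Real.exp_pos _).le (Real.exp_pos _).le)
      (by linarith)) (mul_nonneg (by positivity : (0:ℝ) ≤ 2 * π * lam) hφr.le)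
  -- integrability
  have hfLint : IntegrableOn (sddFL lam p φ) (Set.Ioi (0:ℝ)) := by
    refine MeasureTheory.Integrable.mono hDint (hfLcont.aestronglyMeasurable measurableSet_Ioi) ?_
    rw [ae_restrict_iff' measurableSet_Ioi]
    filter_upwards with r hr
    have h1 := hfLnn r hr; have h2 := hTnn r hr; have h3 := hpt r hr
    rw [Real.norm_eq_abs, Real.norm_eq_abs, abs_of_nonneg h1,
      abs_of_nonneg (show (0:ℝ) ≤ D r by linarith)]
    linarith
  have hTint : IntegrableOn (fun r => |deriv φ r| • sddFNL lam p ψ (φ r)) (Set.Ioi (0:ℝ)) := by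
    refine MeasureTheory.Integrable.mono hDint (hTcont.aestronglyMeasurable measurableSet_Ioi) ?_
    rw [ae_restrict_iff' measurableSet_Ioi]
    filter_upwards with r hr
    have h1 := hfLnn r hr; have h2 := hTnn r hr; have h3 := hpt r hr
    rw [Real.norm_eq_abs, Real.norm_eq_abs, abs_of_nonneg h2,
      abs_of_nonneg (show (0:ℝ) ≤ D r by linarith)]
    linarith
  have hder' : ∀ x ∈ Set.Ioi (0:ℝ), HasDerivWithinAt φ (deriv φ x) (Set.Ioi 0) x :=
    fun x hx => (hφdiff x hx).hasDerivWithinAt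
  have hCVint : IntegrableOn (sddFNL lam p ψ) (Set.Ioi (0:ℝ)) := by
    have := MeasureTheory.integrableOn_image_iff_integrableOn_abs_deriv_smul
      measurableSet_Ioi hder' hφbij.injOn (sddFNL lam p ψ)
    rw [hφbij.image_eq] at this
    exact this.mpr hTint
  have hCV : ∫ x in Set.Ioi (0:ℝ), sddFNL lam p ψ x
      = ∫ r in Set.Ioi (0:ℝ), |deriv φ r| • sddFNL lam p ψ (φ r) := by
    have := MeasureTheory.integral_image_eq_integral_abs_deriv_smul
      measurableSet_Ioi hder' hφbij.injOn (sddFNL lam p ψ)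
    rw [hφbij.image_eq] at this
    exact this
  show ∫ r in Set.Ioi (0:ℝ), (sddFL lam p φ r + sddFNL lam p ψ r) = 1
  rw [MeasureTheory.integral_add hfLint hCVint, hCV,
    ← MeasureTheory.integral_add hfLint hTint]
  rw [MeasureTheory.setIntegral_congr_fun measurableSet_Ioi hpt]
  exact hFTC
end

section
/- Let λ > 0, d₁ > 0, A_L, A_NL, α_L, α_NL > 0 with A_L·d₁^{α_L} ≤ A_NL·d₁^{α_NL}, and let p(u) = 1 − u/d₁ for 0 < u ≤ d₁ and p(u) = 0 for u > d₁. Set r₁(r) = (A_L·r^{α_L}/A_NL)^{1/α_NL}, r₂(r) = (A_NL·r^{α_NL}/A_L)^{1/α_L}, and y₁ = (A_L·d₁^{α_L}/A_NL)^{1/α_NL} (so y₁ ≤ d₁). Then ∫₀^{d₁} exp(−πλr² + 2πλ(r³/(3d₁) − r₁(r)³/(3d₁)))·(1 − r/d₁)·2πλr dr + ∫₀^{y₁} exp(−πλr₂(r)² + 2πλ(r₂(r)³/(3d₁) − r³/(3d₁)))·(r/d₁)·2πλr dr + ∫_{y₁}^{d₁} exp(−πλd₁²/3 − 2πλr³/(3d₁))·(r/d₁)·2πλr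 dr + ∫_{d₁}^{∞} 2πλr·e^{−πλr²} dr = 1. -/
open Real Set intervalIntegral MeasureTheory

private lemma aux_pieces12 (lam d₁ A_L A_NL α_L α_NL : ℝ)
    (hlam : 0 < lam) (hd₁ : 0 < d₁)
    (hAL : 0 < A_L) (hANL : 0 < A_NL) (haL : 0 < α_L) (haNL : 0 < α_NL)
    (hcut : A_L * d₁ ^ α_L ≤ A_NL * d₁ ^ α_NL)
    (r₁ r₂ : ℝ → ℝ) (y₁ : ℝ)
    (hr₁ : ∀ r : ℝ, r₁ r = (A_L * r ^ α_L / A_NL) ^ (1 / α_NL))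
    (hr₂ : ∀ r : ℝ, r₂ r = (A_NL * r ^ α_NL / A_L) ^ (1 / α_L))
    (hy₁ : y₁ = (A_L * d₁ ^ α_L / A_NL) ^ (1 / α_NL)) :
    (∫ r in (0:ℝ)..d₁,
        Real.exp (-(π * lam * r ^ 2) +
            2 * π * lam * (r ^ 3 / (3 * d₁) - (r₁ r) ^ 3 / (3 * d₁))) *
          (1 - r / d₁) * (2 * π * lam * r)) +
      (∫ r in (0:ℝ)..y₁,
        Real.exp (-(π * lam * (r₂ r) ^ 2) +
            2 * π * lam * ((r₂ r) ^ 3 / (3 * d₁) - r ^ 3 / (3 * d₁))) *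
          (r / d₁) * (2 * π * lam * r))
    = 1 - Real.exp (-(π * lam * d₁ ^ 2 / 3) - 2 * π * lam * y₁ ^ 3 / (3 * d₁)) := by
  set β : ℝ := α_L / α_NL with hβdef
  set c : ℝ := (A_L / A_NL) ^ (1 / α_NL) with hcdef
  have hβ : 0 < β := by positivity
  have hc : 0 < c := rpow_pos_of_pos (by positivity) _
  have hr₁' : ∀ r : ℝ, 0 ≤ r → r₁ r = c * r ^ β := by
    intro r hr
    rw [hr₁, show A_L * r ^ α_L / A_NL = (A_L / A_NL) * r ^ α_L by ring,
      Real.mul_rpow (by positivity) (rpow_nonneg hr _), ← Real.rpow_mul hr]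
    rw [hcdef, hβdef]
    congr 1
    field_simp
  have hr₂comp : ∀ x : ℝ, 0 ≤ x → r₂ (c * x ^ β) = x := by
    intro x hx
    have hxβ : (0:ℝ) ≤ x ^ β := rpow_nonneg hx _
    rw [hr₂]
    have h1 : A_NL * (c * x ^ β) ^ α_NL / A_L
        = (A_NL / A_L * c ^ α_NL) * x ^ α_L := by
      rw [Real.mul_rpow hc.le hxβ, ← Real.rpow_mul hx]
      rw [show β * α_NL = α_L by rw [hβdef]; field_simp]
      ring
    rw [h1, Real.mul_rpow (by positivity) (rpow_nonneg hx _), ← Real.rpow_mul hx,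
      show α_L * (1 / α_L) = 1 by field_simp, Real.rpow_one]
    have h2 : (A_NL / A_L * c ^ α_NL) ^ (1 / α_L) = 1 := by
      rw [hcdef, ← Real.rpow_mul (by positivity : (0:ℝ) ≤ A_L / A_NL),
        show 1 / α_NL * α_NL = 1 by field_simp, Real.rpow_one]
      rw [show A_NL / A_L * (A_L / A_NL) = 1 by field_simp, Real.one_rpow]
    rw [h2, one_mul]
  have hy : y₁ = c * d₁ ^ β := by rw [hy₁, ← hr₁ d₁, hr₁' d₁ hd₁.le]
  have hcube : ∀ x : ℝ, 0 ≤ x → (c * x ^ β) ^ 3 = c ^ 3 * x ^ (3 * β) := by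
    intro x hx
    rw [mul_pow, ← Real.rpow_natCast (x ^ β) 3, ← Real.rpow_mul hx]
    congr 1
    push_cast; ring
  -- the combined density pieces, in c,β form
  set F : ℝ → ℝ := fun r =>
    Real.exp (-(π * lam * r ^ 2) +
      2 * π * lam * (r ^ 3 / (3 * d₁) - c ^ 3 * r ^ (3 * β) / (3 * d₁))) with hF
  set C : ℝ := 2 * π * lam * β * c ^ 3 / d₁ with hC
  have hrpowc : Continuous fun r : ℝ => r ^ (3 * β) :=
    continuous_id.rpow_const fun x => Or.inr (by positivity)
  have hFcont : Continuous F := by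
    rw [hF]
    exact Real.continuous_exp.comp (((continuous_const.mul (continuous_pow 2)).neg).add
      (continuous_const.mul (((continuous_pow 3).div_const (3 * d₁)).sub
        ((continuous_const.mul hrpowc).div_const (3 * d₁)))))
  -- integrability
  have hInt1 : IntervalIntegrable
      (fun r => F r * (1 - r / d₁) * (2 * π * lam * r)) volume 0 d₁ :=
    Continuous.intervalIntegrable
      ((hFcont.mul (continuous_const.sub (continuous_id.div_const d₁))).mul
        (continuous_const.mul continuous_id)) 0 d₁
  have hInt2 : IntervalIntegrable (fun r => F r * C * r ^ (3 * β - 1)) volume 0 d₁ := by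
    exact (intervalIntegrable_rpow' (by linarith)).continuousOn_mul
      (hFcont.mul continuous_const).continuousOn
  have hIcc : uIcc (0:ℝ) d₁ = Icc 0 d₁ := uIcc_of_le hd₁.le
  have hne : ∀ᵐ x : ℝ ∂(volume : Measure ℝ), x ≠ 0 := by
    have h : {x : ℝ | ¬ x ≠ 0} = {(0:ℝ)} := by ext; simp
    rw [ae_iff, h]; exact measure_singleton 0
  -- pointwise key identity for the substituted integrand
  have hkey : ∀ x : ℝ, 0 < x →
      (c * (β * x ^ (β - 1))) * (Real.exp (-(π * lam * (r₂ (c * x ^ β)) ^ 2) +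
          2 * π * lam * ((r₂ (c * x ^ β)) ^ 3 / (3 * d₁) - (c * x ^ β) ^ 3 / (3 * d₁))) *
        ((c * x ^ β) / d₁) * (2 * π * lam * (c * x ^ β)))
      = F x * C * x ^ (3 * β - 1) := by
    intro x hx
    rw [hr₂comp x hx.le, hcube x hx.le]
    simp only [hF, hC]
    have e1 : x ^ β * x ^ β * x ^ (β - 1) = x ^ (3 * β - 1) := by
      rw [← Real.rpow_add hx, ← Real.rpow_add hx]; congr 1; ring
    rw [← e1]; ring
  -- substitution x ↦ c x^β in the second integral
  have hsub : (∫ r in (0:ℝ)..y₁,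
        Real.exp (-(π * lam * (r₂ r) ^ 2) +
            2 * π * lam * ((r₂ r) ^ 3 / (3 * d₁) - r ^ 3 / (3 * d₁))) *
          (r / d₁) * (2 * π * lam * r))
      = ∫ x in (0:ℝ)..d₁, F x * C * x ^ (3 * β - 1) := by
    have hfc : Continuous (fun x : ℝ => c * x ^ β) :=
      continuous_const.mul (continuous_id.rpow_const fun x => Or.inr hβ.le)
    have hr₂c : Continuous r₂ := by
      have h : r₂ = fun r => (A_NL * r ^ α_NL / A_L) ^ (1 / α_L) := funext hr₂
      rw [h]
      exact ((continuous_const.mul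
        (continuous_id.rpow_const fun x => Or.inr haNL.le)).div_const A_L).rpow_const
          fun x => Or.inr (by positivity)
    have hgc : Continuous (fun u : ℝ =>
        Real.exp (-(π * lam * (r₂ u) ^ 2) +
            2 * π * lam * ((r₂ u) ^ 3 / (3 * d₁) - u ^ 3 / (3 * d₁))) *
          (u / d₁) * (2 * π * lam * u)) :=
      ((Real.continuous_exp.comp ((continuous_const.mul (hr₂c.pow 2)).neg.add
        (continuous_const.mul (((hr₂c.pow 3).div_const (3 * d₁)).sub
          ((continuous_pow 3).div_const (3 * d₁)))))).mul
        (continuous_id.div_const d₁)).mul (continuous_const.mul continuous_id)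
    have hff' : ∀ x ∈ Ioo (min (0:ℝ) d₁) (max 0 d₁),
        HasDerivWithinAt (fun x : ℝ => c * x ^ β) (c * (β * x ^ (β - 1))) (Ioi x) x := by
      intro x hx
      have hx0 : 0 < x := by have h := hx.1; rwa [min_eq_left hd₁.le] at h
      exact ((Real.hasDerivAt_rpow_const (p := β)
        (Or.inl hx0.ne')).const_mul c).hasDerivWithinAt
    have hg2 : IntegrableOn (fun x => (c * (β * x ^ (β - 1))) • ((fun u : ℝ =>
        Real.exp (-(π * lam * (r₂ u) ^ 2) +
            2 * π * lam * ((r₂ u) ^ 3 / (3 * d₁) - u ^ 3 / (3 * d₁))) *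
          (u / d₁) * (2 * π * lam * u)) ∘ (fun x : ℝ => c * x ^ β)) x) (Set.uIcc (0:ℝ) d₁) := by
      have base : IntegrableOn (fun r => F r * C * r ^ (3 * β - 1)) (Set.uIcc (0:ℝ) d₁) volume :=
        (intervalIntegrable_iff').mp hInt2
      refine base.congr ?_
      rw [hIcc]
      refine (ae_restrict_iff' measurableSet_Icc).2 ?_
      filter_upwards [hne] with x hx0 hxI
      have hx : 0 < x := lt_of_le_of_ne hxI.1 (Ne.symm hx0)
      simp only [Function.comp, smul_eq_mul]
      exact (hkey x hx).symm
    have h0 : c * (0:ℝ) ^ β = 0 := by rw [Real.zero_rpow hβ.ne', mul_zero]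
    have hsub0 := integral_comp_smul_deriv''' (a := 0) (b := d₁)
      (f := fun x : ℝ => c * x ^ β) (f' := fun x : ℝ => c * (β * x ^ (β - 1)))
      (g := fun u : ℝ =>
        Real.exp (-(π * lam * (r₂ u) ^ 2) +
            2 * π * lam * ((r₂ u) ^ 3 / (3 * d₁) - u ^ 3 / (3 * d₁))) *
          (u / d₁) * (2 * π * lam * u))
      hfc.continuousOn hff' hgc.continuousOn
      (hgc.continuousOn.integrableOn_compact (isCompact_uIcc.image hfc)) hg2
    rw [h0, ← hy] at hsub0
    rw [← hsub0]
    refine integral_congr_ae (Filter.Eventually.of_forall fun x hx => ?_)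
    rw [uIoc_of_le hd₁.le] at hx
    simpa only [Function.comp, smul_eq_mul] using hkey x hx.1
  -- FTC for the combined integrand on [0, d₁]
  have hFTC : (∫ r in (0:ℝ)..d₁,
      (F r * (1 - r / d₁) * (2 * π * lam * r) + F r * C * r ^ (3 * β - 1)))
      = (-F d₁) - (-F 0) := by
    refine integral_eq_sub_of_hasDeriv_right_of_le hd₁.le (hFcont.neg.continuousOn)
      (fun x hx => ?_) (hInt1.add hInt2)
    have hx0 : 0 < x := hx.1
    have h1 : HasDerivAt (fun r : ℝ => r ^ (3 * β)) ((3 * β) * x ^ (3 * β - 1)) x :=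
      Real.hasDerivAt_rpow_const (Or.inl hx0.ne')
    have h2 := (((hasDerivAt_pow 2 x).const_mul (π * lam)).fun_neg).fun_add
      ((((hasDerivAt_pow 3 x).div_const (3 * d₁)).fun_sub
        ((h1.const_mul (c ^ 3)).div_const (3 * d₁))).const_mul (2 * π * lam))
    have h3 := (h2.exp).fun_neg
    have h4 : HasDerivAt (fun r => -F r)
        (F x * (1 - x / d₁) * (2 * π * lam * x) + F x * C * x ^ (3 * β - 1)) x := by
      simp only [hF, hC]
      refine h3.congr_deriv ?_
      push_cast
      field_simp
      ring
    exact h4.hasDerivWithinAt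
  have hF0 : F 0 = 1 := by
    simp only [hF]
    norm_num [Real.zero_rpow (ne_of_gt (show (0:ℝ) < 3 * β by positivity))]
  have hFd : F d₁ = Real.exp (-(π * lam * d₁ ^ 2 / 3) - 2 * π * lam * y₁ ^ 3 / (3 * d₁)) := by
    have hy3 : y₁ ^ 3 = c ^ 3 * d₁ ^ (3 * β) := by rw [hy]; exact hcube d₁ hd₁.le
    simp only [hF]
    rw [hy3]
    congr 1
    field_simp
    ring
  -- assemble
  have hP1 : (∫ r in (0:ℝ)..d₁,
      Real.exp (-(π * lam * r ^ 2) +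
          2 * π * lam * (r ^ 3 / (3 * d₁) - (r₁ r) ^ 3 / (3 * d₁))) *
        (1 - r / d₁) * (2 * π * lam * r))
      = ∫ r in (0:ℝ)..d₁, F r * (1 - r / d₁) * (2 * π * lam * r) := by
    refine integral_congr fun r hr => ?_
    rw [hIcc] at hr
    rw [hr₁' r hr.1, hcube r hr.1]
  rw [hP1, hsub, ← intervalIntegral.integral_add hInt1 hInt2, hFTC, hF0, hFd]
  ring


private lemma aux_piece3 (lam d₁ y₁ : ℝ) (hlam : 0 < lam) (hd₁ : 0 < d₁) :
    (∫ r in y₁..d₁,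
        Real.exp (-(π * lam * d₁ ^ 2 / 3) - 2 * π * lam * r ^ 3 / (3 * d₁)) *
          (r / d₁) * (2 * π * lam * r))
      = Real.exp (-(π * lam * d₁ ^ 2 / 3) - 2 * π * lam * y₁ ^ 3 / (3 * d₁))
        - Real.exp (-(π * lam * d₁ ^ 2)) := by
  have hder : ∀ x ∈ uIcc y₁ d₁,
      HasDerivAt (fun r : ℝ => -Real.exp (-(π * lam * d₁ ^ 2 / 3) - 2 * π * lam * r ^ 3 / (3 * d₁)))
      (Real.exp (-(π * lam * d₁ ^ 2 / 3) - 2 * π * lam * x ^ 3 / (3 * d₁)) *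
          (x / d₁) * (2 * π * lam * x)) x := by
    intro x _
    have h1 : HasDerivAt (fun r : ℝ => -(π * lam * d₁ ^ 2 / 3) - 2 * π * lam * r ^ 3 / (3 * d₁))
        (-(2 * π * lam * (3 * x ^ 2) / (3 * d₁))) x := by
      have := (((hasDerivAt_pow 3 x).const_mul (2 * π * lam)).div_const (3 * d₁)).const_sub
        (-(π * lam * d₁ ^ 2 / 3))
      simpa using this
    have := (h1.exp).fun_neg
    refine this.congr_deriv ?_
    field_simp
  have hint : IntervalIntegrable (fun x : ℝ =>
      Real.exp (-(π * lam * d₁ ^ 2 / 3) - 2 * π * lam * x ^ 3 / (3 * d₁)) *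
          (x / d₁) * (2 * π * lam * x)) volume y₁ d₁ :=
    (Continuous.intervalIntegrable (by fun_prop) y₁ d₁)
  have := integral_eq_sub_of_hasDerivAt hder hint
  rw [this]
  have h2 : -(π * lam * d₁ ^ 2 / 3) - 2 * π * lam * d₁ ^ 3 / (3 * d₁) = -(π * lam * d₁ ^ 2) := by
    field_simp; ring
  rw [h2]; ring


private lemma aux_piece4 (lam d₁ : ℝ) (hlam : 0 < lam) (hd₁ : 0 < d₁) :
    (∫ r in Set.Ioi d₁, 2 * π * lam * r * Real.exp (-(π * lam * r ^ 2)))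
      = Real.exp (-(π * lam * d₁ ^ 2)) := by
  have hder : ∀ x ∈ Ioi d₁, HasDerivAt (fun r : ℝ => -Real.exp (-(π * lam * r ^ 2)))
      (2 * π * lam * x * Real.exp (-(π * lam * x ^ 2))) x := by
    intro x hx
    have h1 : HasDerivAt (fun r : ℝ => -(π * lam * r ^ 2)) (-(π * lam * (2 * x))) x := by
      simpa using ((hasDerivAt_pow 2 x).const_mul (π * lam)).fun_neg
    have := (h1.exp).fun_neg
    refine this.congr_deriv ?_
    ring
  have hnn : ∀ x ∈ Ioi d₁, 0 ≤ 2 * π * lam * x * Real.exp (-(π * lam * x ^ 2)) := by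
    intro x hx
    have hx0 : 0 < x := hd₁.trans hx
    positivity
  have htend : Filter.Tendsto (fun r : ℝ => -Real.exp (-(π * lam * r ^ 2)))
      Filter.atTop (nhds 0) := by
    have h1 : Filter.Tendsto (fun r : ℝ => -(π * lam * r ^ 2)) Filter.atTop Filter.atBot := by
      apply Filter.tendsto_neg_atTop_atBot.comp
      exact (Filter.tendsto_pow_atTop two_ne_zero).const_mul_atTop (by positivity)
    have := (Real.tendsto_exp_atBot.comp h1).neg
    simpa using this
  have hcont : ContinuousWithinAt (fun r : ℝ => -Real.exp (-(π * lam * r ^ 2))) (Ici d₁) d₁ := by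
    exact Continuous.continuousWithinAt (by fun_prop)
  have := integral_Ioi_of_hasDerivAt_of_nonneg hcont hder hnn htend
  rw [this]; simp


/-- In the 3GPP special case, the four explicit serving-distance density pieces
`f_{R,1}^L`, `f_{R,1}^{NL}` (on `(0, y₁]` and `(y₁, d₁]`) and `f_{R,2}^{NL}`
integrate to 1. -/
theorem threeGPP_serving_distance_densities_sum_to_one
    (lam d₁ A_L A_NL α_L α_NL : ℝ)
    (hlam : 0 < lam) (hd₁ : 0 < d₁)
    (hAL : 0 < A_L) (hANL : 0 < A_NL) (haL : 0 < α_L) (haNL : 0 < α_NL)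
    (hcut : A_L * d₁ ^ α_L ≤ A_NL * d₁ ^ α_NL)
    (r₁ r₂ : ℝ → ℝ) (y₁ : ℝ)
    (hr₁ : ∀ r : ℝ, r₁ r = (A_L * r ^ α_L / A_NL) ^ (1 / α_NL))
    (hr₂ : ∀ r : ℝ, r₂ r = (A_NL * r ^ α_NL / A_L) ^ (1 / α_L))
    (hy₁ : y₁ = (A_L * d₁ ^ α_L / A_NL) ^ (1 / α_NL)) :
    (∫ r in (0:ℝ)..d₁,
        Real.exp (-(π * lam * r ^ 2) +
            2 * π * lam * (r ^ 3 / (3 * d₁) - (r₁ r) ^ 3 / (3 * d₁))) *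
          (1 - r / d₁) * (2 * π * lam * r)) +
      (∫ r in (0:ℝ)..y₁,
        Real.exp (-(π * lam * (r₂ r) ^ 2) +
            2 * π * lam * ((r₂ r) ^ 3 / (3 * d₁) - r ^ 3 / (3 * d₁))) *
          (r / d₁) * (2 * π * lam * r)) +
      (∫ r in y₁..d₁,
        Real.exp (-(π * lam * d₁ ^ 2 / 3) - 2 * π * lam * r ^ 3 / (3 * d₁)) *
          (r / d₁) * (2 * π * lam * r)) +
      (∫ r in Set.Ioi d₁, 2 * π * lam * r * Real.exp (-(π * lam * r ^ 2))) = 1 := by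
  have h12 := aux_pieces12 lam d₁ A_L A_NL α_L α_NL hlam hd₁ hAL hANL haL haNL hcut
    r₁ r₂ y₁ hr₁ hr₂ hy₁
  have h3 := aux_piece3 lam d₁ y₁ hlam hd₁
  have h4 := aux_piece4 lam d₁ hlam hd₁
  rw [h12, h3, h4]
  ring
end
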